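/- For integers k ≥ 2 and n ≥ 2k, let F be a family of stable k-subsets of {1,...,n} with |F| ≥ k²·C(n-k-2, k-2), and γ ∈ (0,1] such that every element of {1,...,n} belongs to at most γ·|F| sets of F. Then the number of unordered pairs {A,B} of disjoint members of F is at least (1/4)·((1−γ)·|F| − k²·C(n-k-2,k-2))·(|F| − k²·C(n-k-2,k-2)). -/

import Mathlib

open Finset

attribute [local instance] Classical.propDecidable

/-- `A` is a stable subset of `{1,...,n}`: no two cyclically consecutive elements. -/
def Stable (n : ℕ) (A : Finset ℕ) : Prop :=
  (∀ i ∈ A, i + 1 ∉ A) ∧ ¬(1 ∈ A ∧ n ∈ A)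

/-- The collection of stable `k`-subsets of `{1,...,n}`. -/
noncomputable def stableSets (n k : ℕ) : Finset (Finset ℕ) :=
  ((Finset.Icc 1 n).powersetCard k).filter (fun A => Stable n A)

lemma gap_count : ∀ ℓ s : ℕ,
    (((Finset.Icc 1 ℓ).powersetCard s).filter (fun S => ∀ a ∈ S, a + 1 ∉ S)).card
      ≤ (ℓ + 1 - s).choose s := by
  intro ℓ
  induction ℓ using Nat.strong_induction_on with
  | _ ℓ ih =>
    intro s
    match ℓ, ih with
    | 0, _ =>
      have h1 : (((Finset.Icc 1 0).powersetCard s).filter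
            (fun S => ∀ a ∈ S, a + 1 ∉ S)).card ≤ ((Finset.Icc 1 0).powersetCard s).card :=
        Finset.card_filter_le _ _
      rw [Finset.card_powersetCard] at h1
      simp only [Nat.card_Icc] at h1
      rcases s with _ | s
      · simpa using h1
      · have h4 : (0:ℕ) + 1 - 1 = 0 := rfl
        rw [h4] at h1
        have h3 : (0 : ℕ).choose (s+1) = 0 := Nat.choose_eq_zero_of_lt (by omega)
        have h2 : (0 + 1 - (s+1)).choose (s+1) = 0 := by
          have h5 : 0 + 1 - (s+1) = 0 := by omega
          rw [h5]; exact Nat.choose_eq_zero_of_lt (by omega)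
        omega
    | 1, _ =>
      have h1 : (((Finset.Icc 1 1).powersetCard s).filter
            (fun S => ∀ a ∈ S, a + 1 ∉ S)).card ≤ ((Finset.Icc 1 1).powersetCard s).card :=
        Finset.card_filter_le _ _
      rw [Finset.card_powersetCard] at h1
      simp only [Nat.card_Icc] at h1
      rcases s with _ | s
      · simpa using h1
      · rcases s with _ | s
        · simpa using h1
        · have h4 : (1:ℕ) + 1 - 1 = 1 := rfl
          rw [h4] at h1
          have h2 : (1 : ℕ).choose (s+1+1) = 0 := Nat.choose_eq_zero_of_lt (by omega)
          have h3 : (1 + 1 - (s+1+1)).choose (s+1+1) = 0 := by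
            have h5 : 1 + 1 - (s+1+1) = 0 := by omega
            rw [h5]; exact Nat.choose_eq_zero_of_lt (by omega)
          omega
    | (l+2), ih =>
      by_cases hs0 : s = 0
      · subst hs0
        have h1 : (((Finset.Icc 1 (l+2)).powersetCard 0).filter
              (fun S => ∀ a ∈ S, a + 1 ∉ S)).card ≤ ((Finset.Icc 1 (l+2)).powersetCard 0).card :=
          Finset.card_filter_le _ _
        rw [Finset.card_powersetCard] at h1
        simpa using h1
      obtain ⟨s', rfl⟩ : ∃ s', s = s' + 1 := ⟨s - 1, by omega⟩
      set P : Finset ℕ → Prop := fun S => ∀ a ∈ S, a + 1 ∉ S with hP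
      set 𝒜 := ((Finset.Icc 1 (l+2)).powersetCard (s'+1)).filter P with h𝒜
      have hsplit : (𝒜.filter (fun S => (l+2) ∈ S)).card
          + (𝒜.filter (fun S => ¬ (l+2) ∈ S)).card = 𝒜.card :=
        Finset.card_filter_add_card_filter_not _
      -- part without l+2
      have hout : (𝒜.filter (fun S => ¬ (l+2) ∈ S))
          ⊆ ((Finset.Icc 1 (l+1)).powersetCard (s'+1)).filter P := by
        intro S hS
        simp only [h𝒜, Finset.mem_filter, Finset.mem_powersetCard] at hS ⊢
        refine ⟨⟨?_, hS.1.1.2⟩, hS.1.2⟩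
        intro a ha
        have h1 := hS.1.1.1 ha
        have h2 := hS.2
        simp only [Finset.mem_Icc] at h1 ⊢
        constructor
        · exact h1.1
        · rcases Nat.lt_or_ge a (l+2) with h | h
          · omega
          · exfalso; apply h2; have : a = l + 2 := by omega
            rw [← this]; exact ha
      have houtc : (𝒜.filter (fun S => ¬ (l+2) ∈ S)).card ≤ ((l+1) + 1 - (s'+1)).choose (s'+1) :=
        le_trans (Finset.card_le_card hout) (ih (l+1) (by omega) (s'+1))
      -- part with l+2 : erase injection
      have hin : (𝒜.filter (fun S => (l+2) ∈ S)).card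
          ≤ (((Finset.Icc 1 l).powersetCard s').filter P).card := by
        apply Finset.card_le_card_of_injOn (fun S => S.erase (l+2))
        · intro S hS
          simp only [Finset.mem_coe, h𝒜, Finset.mem_filter, Finset.mem_powersetCard] at hS ⊢
          obtain ⟨⟨⟨hsub, hcard⟩, hgap⟩, hmem⟩ := hS
          refine ⟨⟨?_, ?_⟩, ?_⟩
          · intro a ha
            have haS := Finset.mem_of_mem_erase ha
            have hane := Finset.ne_of_mem_erase ha
            have h1 := hsub haS
            simp only [Finset.mem_Icc] at h1 ⊢
            refine ⟨h1.1, ?_⟩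
            rcases Nat.lt_or_ge a (l+1) with h | h
            · omega
            · exfalso
              have : a = l + 1 := by omega
              apply hgap a haS
              rw [this]; exact hmem
          · rw [Finset.card_erase_of_mem hmem, hcard]; omega
          · intro a ha hcon
            exact hgap a (Finset.mem_of_mem_erase ha) (Finset.mem_of_mem_erase hcon)
        · intro S hS S' hS' hee
          simp only [Finset.mem_coe, h𝒜, Finset.mem_filter] at hS hS'
          have hee' : S.erase (l+2) = S'.erase (l+2) := hee
          have h1 : insert (l+2) (S.erase (l+2)) = insert (l+2) (S'.erase (l+2)) := by rw [hee']
          rwa [Finset.insert_erase hS.2, Finset.insert_erase hS'.2] at h1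
      have hinc : (𝒜.filter (fun S => (l+2) ∈ S)).card ≤ (l + 1 - s').choose s' :=
        le_trans hin (ih l (by omega) s')
      -- combine with Pascal
      by_cases hbig : s' + 1 ≤ l + 2
      · have harith1 : (l+1) + 1 - (s'+1) = l + 1 - s' := by omega
        rw [harith1] at houtc
        have hpascal : (l + 1 - s' + 1).choose (s'+1)
            = (l + 1 - s').choose s' + (l + 1 - s').choose (s'+1) :=
          Nat.choose_succ_succ (l + 1 - s') s'
        have harith2 : l + 1 - s' + 1 = l + 2 + 1 - (s'+1) := by omega
        rw [harith2] at hpascal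
        omega
      · -- s too big: everything is empty anyway
        have h1 : 𝒜.card ≤ ((Finset.Icc 1 (l+2)).powersetCard (s'+1)).card :=
          Finset.card_filter_le _ _
        rw [Finset.card_powersetCard] at h1
        have hic : (Finset.Icc 1 (l+2)).card = l + 2 := by rw [Nat.card_Icc]; omega
        rw [hic] at h1
        have h2 : (l + 2 : ℕ).choose (s' + 1) = 0 := Nat.choose_eq_zero_of_lt (by omega)
        have h3 : (l + 2 + 1 - (s'+1)).choose (s' + 1) = 0 :=
          Nat.choose_eq_zero_of_lt (by omega)
        omega


lemma pair_count (n k : ℕ) (hk : 2 ≤ k) (hn : 2 * k ≤ n) (x y : ℕ) (hxy : x ≠ y) :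
    ((stableSets n k).filter (fun B => x ∈ B ∧ y ∈ B)).card
      ≤ (n - k - 2).choose (k - 2) := by
  have hmem : ∀ B ∈ (stableSets n k).filter (fun B => x ∈ B ∧ y ∈ B),
      B ⊆ Finset.Icc 1 n ∧ B.card = k ∧ Stable n B ∧ x ∈ B ∧ y ∈ B := by
    intro B hB
    simp only [stableSets, Finset.mem_filter, Finset.mem_powersetCard] at hB
    exact ⟨hB.1.1.1, hB.1.1.2, hB.1.2, hB.2⟩
  rcases eq_or_lt_of_le hk with hk2 | hk3
  · have h1 : ((stableSets n k).filter (fun B => x ∈ B ∧ y ∈ B)).card ≤ 1 := by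
      apply Finset.card_le_one.2
      intro B hB B' hB'
      obtain ⟨_, hBc, _, hBx, hBy⟩ := hmem B hB
      obtain ⟨_, hBc', _, hBx', hBy'⟩ := hmem B' hB'
      have e1 : B = {x, y} := by
        apply (Finset.eq_of_subset_of_card_le ?_ ?_).symm
        · intro a ha
          simp only [Finset.mem_insert, Finset.mem_singleton] at ha
          rcases ha with rfl | rfl
          · exact hBx
          · exact hBy
        · rw [hBc, Finset.card_insert_of_notMem (by simpa using hxy),
            Finset.card_singleton]; omega
      have e2 : B' = {x, y} := by
        apply (Finset.eq_of_subset_of_card_le ?_ ?_).symm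
        · intro a ha
          simp only [Finset.mem_insert, Finset.mem_singleton] at ha
          rcases ha with rfl | rfl
          · exact hBx'
          · exact hBy'
        · rw [hBc', Finset.card_insert_of_notMem (by simpa using hxy),
            Finset.card_singleton]; omega
      rw [e1, e2]
    have h2 : (1 : ℕ) ≤ (n - k - 2).choose (k - 2) := by
      rw [← hk2]; simp
    omega
  · have hk3' : 3 ≤ k := hk3
    have hn6 : 6 ≤ n := by omega
    set u : ℕ → ℕ := fun b => if x ≤ b then b - x else b + n - x with hu
    have hux : u x = 0 := by simp [hu]
    -- u is injective on [1,n] (given x in [1,n])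
    have key0 : ∀ b b' : ℕ, 1 ≤ b → b ≤ n → 1 ≤ b' → b' ≤ n → 1 ≤ x → x ≤ n →
        u b = u b' → b = b' := by
      intro b b' h1 h2 h3 h4 h5 h6 h7
      simp only [hu] at h7
      split_ifs at h7 <;> omega
    -- cyclic adjacency is preserved by u
    have keyadj : ∀ B : Finset ℕ, B ⊆ Finset.Icc 1 n → Stable n B → 1 ≤ x → x ≤ n →
        ∀ b ∈ B, ∀ b' ∈ B, u b' ≠ u b + 1 := by
      intro B hsub hst hx1 hx2 b hb b' hb' hcon
      have hbb : 1 ≤ b ∧ b ≤ n := by have := hsub hb; simpa [Finset.mem_Icc] using this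
      have hbb' : 1 ≤ b' ∧ b' ≤ n := by have := hsub hb'; simpa [Finset.mem_Icc] using this
      simp only [hu] at hcon
      rcases le_or_gt x b with hc1 | hc1 <;> rcases le_or_gt x b' with hc2 | hc2
      · rw [if_pos hc2, if_pos hc1] at hcon
        have hb1 : b' = b + 1 := by omega
        exact hst.1 b hb (hb1 ▸ hb')
      · rw [if_neg (by omega), if_pos hc1] at hcon
        have hb1 : b' = 1 ∧ b = n := by omega
        exact hst.2 ⟨hb1.1 ▸ hb', hb1.2 ▸ hb⟩
      · rw [if_pos hc2, if_neg (by omega)] at hcon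
        omega
      · rw [if_neg (by omega), if_neg (by omega)] at hcon
        have hb1 : b' = b + 1 := by omega
        exact hst.1 b hb (hb1 ▸ hb')
    -- range of u on B \ {x}
    have urange : ∀ B : Finset ℕ, B ⊆ Finset.Icc 1 n → Stable n B → x ∈ B →
        ∀ b ∈ B, b ≠ x → 2 ≤ u b ∧ u b ≤ n - 2 := by
      intro B hsub hst hxB b hb hbx
      have hx12 : 1 ≤ x ∧ x ≤ n := by have := hsub hxB; simpa [Finset.mem_Icc] using this
      have hbb : 1 ≤ b ∧ b ≤ n := by have := hsub hb; simpa [Finset.mem_Icc] using this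
      have h0 : u b ≠ 0 := by
        intro h
        exact hbx (key0 b x hbb.1 hbb.2 hx12.1 hx12.2 hx12.1 hx12.2 (by rw [h, hux]))
      have h1 : u b ≠ 1 := by
        have := keyadj B hsub hst hx12.1 hx12.2 x hxB b hb
        rw [hux] at this; simpa using this
      have h2 : u b ≤ n - 1 := by
        simp only [hu]; split_ifs <;> omega
      have h3 : u b ≠ n - 1 := by
        simp only [hu]
        split_ifs with hc
        · intro hcon
          have : x = 1 ∧ b = n := by omega
          exact hst.2 ⟨this.1 ▸ hxB, this.2 ▸ hb⟩
        · intro hcon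
          have hb1 : x = b + 1 := by omega
          exact hst.1 b hb (hb1 ▸ hxB)
      omega
    -- separation of u-values of two distinct elements of a stable set
    have usep : ∀ B : Finset ℕ, B ⊆ Finset.Icc 1 n → Stable n B → x ∈ B →
        ∀ b ∈ B, ∀ b' ∈ B, b ≠ b' → u b + 2 ≤ u b' ∨ u b' + 2 ≤ u b := by
      intro B hsub hst hxB b hb b' hb' hne
      have hx12 : 1 ≤ x ∧ x ≤ n := by have := hsub hxB; simpa [Finset.mem_Icc] using this
      have hbb : 1 ≤ b ∧ b ≤ n := by have := hsub hb; simpa [Finset.mem_Icc] using this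
      have hbb' : 1 ≤ b' ∧ b' ≤ n := by have := hsub hb'; simpa [Finset.mem_Icc] using this
      have h1 : u b' ≠ u b + 1 := keyadj B hsub hst hx12.1 hx12.2 b hb b' hb'
      have h2 : u b ≠ u b' + 1 := keyadj B hsub hst hx12.1 hx12.2 b' hb' b hb
      have h3 : u b ≠ u b' := fun h =>
        hne (key0 b b' hbb.1 hbb.2 hbb'.1 hbb'.2 hx12.1 hx12.2 h)
      omega
    clear_value u
    -- the compression map
    set ζ : ℕ → ℕ := fun b => if u b < u y then u b - 1 else u b - 3 with hζ
    set M : Finset ℕ → Finset ℕ := fun B => (B \ {x, y}).image ζ with hM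
    -- target collection
    set 𝒩 := ((Finset.Icc 1 (n-5)).powersetCard (k-2)).filter
        (fun S => ∀ a ∈ S, a + 1 ∉ S) with h𝒩
    have hcard𝒩 : 𝒩.card ≤ (n - k - 2).choose (k - 2) := by
      have := gap_count (n-5) (k-2)
      have harith : n - 5 + 1 - (k - 2) = n - k - 2 := by omega
      rw [harith] at this
      exact this
    -- basic per-B facts
    have hBfacts : ∀ B ∈ (stableSets n k).filter (fun B => x ∈ B ∧ y ∈ B),
        ∀ b ∈ B \ {x, y}, (2 ≤ u b ∧ u b ≤ n - 2) ∧
          (u b < u y → u b + 2 ≤ u y) ∧ (¬ u b < u y → u y + 2 ≤ u b) := by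
      intro B hB b hb
      obtain ⟨hsub, hcard, hst, hxB, hyB⟩ := hmem B hB
      simp only [Finset.mem_sdiff, Finset.mem_insert, Finset.mem_singleton] at hb
      have hbB := hb.1
      have hbx : b ≠ x := fun h => hb.2 (Or.inl h)
      have hby : b ≠ y := fun h => hb.2 (Or.inr h)
      have h1 := urange B hsub hst hxB b hbB hbx
      have h2 := usep B hsub hst hxB b hbB y hyB hby
      exact ⟨h1, fun h => by omega, fun h => by omega⟩
    have hvy : ∀ B ∈ (stableSets n k).filter (fun B => x ∈ B ∧ y ∈ B),
        2 ≤ u y ∧ u y ≤ n - 2 := by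
      intro B hB
      obtain ⟨hsub, hcard, hst, hxB, hyB⟩ := hmem B hB
      exact urange B hsub hst hxB y hyB (Ne.symm hxy)
    -- the map lands in 𝒩
    have hmaps : ∀ B ∈ (stableSets n k).filter (fun B => x ∈ B ∧ y ∈ B), M B ∈ 𝒩 := by
      intro B hB
      obtain ⟨hsub, hcard, hst, hxB, hyB⟩ := hmem B hB
      have hvyB := hvy B hB
      have hfacts := hBfacts B hB
      simp only [h𝒩, Finset.mem_filter, Finset.mem_powersetCard]
      refine ⟨⟨?_, ?_⟩, ?_⟩
      · -- subset of Icc 1 (n-5)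
        intro a ha
        simp only [hM, Finset.mem_image] at ha
        obtain ⟨b, hb, rfl⟩ := ha
        obtain ⟨⟨hb2, hbn2⟩, hlow, hhigh⟩ := hfacts b hb
        simp only [hζ, Finset.mem_Icc]
        split_ifs with hc
        · have := hlow hc
          omega
        · have := hhigh hc
          omega
      · -- cardinality
        have hinj : Set.InjOn ζ (B \ {x, y} : Finset ℕ) := by
          intro b hb b' hb' heq
          simp only [Finset.mem_coe] at hb hb'
          obtain ⟨⟨hb2, hbn2⟩, hlow, hhigh⟩ := hfacts b hb
          obtain ⟨⟨hb2', hbn2'⟩, hlow', hhigh'⟩ := hfacts b' hb'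
          simp only [Finset.mem_sdiff] at hb hb'
          have hbicc : b ∈ Finset.Icc 1 n := hsub hb.1
          have hbicc' : b' ∈ Finset.Icc 1 n := hsub hb'.1
          have hxicc : x ∈ Finset.Icc 1 n := hsub hxB
          simp only [Finset.mem_Icc] at hbicc hbicc' hxicc
          simp only [hζ] at heq
          have huu : u b = u b' := by
            by_cases hc1 : u b < u y <;> by_cases hc2 : u b' < u y
            · rw [if_pos hc1, if_pos hc2] at heq
              have := hlow hc1; have := hlow' hc2; omega
            · rw [if_pos hc1, if_neg hc2] at heq
              have := hlow hc1; have := hhigh' hc2; omega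
            · rw [if_neg hc1, if_pos hc2] at heq
              have := hhigh hc1; have := hlow' hc2; omega
            · rw [if_neg hc1, if_neg hc2] at heq
              have := hhigh hc1; have := hhigh' hc2; omega
          exact key0 b b' hbicc.1 hbicc.2 hbicc'.1 hbicc'.2 hxicc.1 hxicc.2 huu
        rw [hM]
        rw [Finset.card_image_of_injOn hinj]
        have hxyB : ({x, y} : Finset ℕ) ⊆ B := by
          intro a ha
          simp only [Finset.mem_insert, Finset.mem_singleton] at ha
          rcases ha with rfl | rfl
          · exact hxB
          · exact hyB
        rw [Finset.card_sdiff_of_subset hxyB, hcard,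
          Finset.card_insert_of_notMem (by simpa using hxy), Finset.card_singleton]
      · -- gap property of the image
        intro a ha hcon
        simp only [hM, Finset.mem_image] at ha hcon
        obtain ⟨b, hb, hba⟩ := ha
        obtain ⟨b2, hb2m, hb2a⟩ := hcon
        obtain ⟨⟨hbl, hbh⟩, hlow, hhigh⟩ := hfacts b hb
        obtain ⟨⟨hbl2, hbh2⟩, hlow2, hhigh2⟩ := hfacts b2 hb2m
        simp only [Finset.mem_sdiff] at hb hb2m
        have hadj := keyadj B hsub hst
          (by have := hsub hxB; simp only [Finset.mem_Icc] at this; exact this.1)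
          (by have := hsub hxB; simp only [Finset.mem_Icc] at this; exact this.2)
          b hb.1 b2 hb2m.1
        simp only [hζ] at hba hb2a
        by_cases hc1 : u b < u y <;> by_cases hc2 : u b2 < u y
        · rw [if_pos hc1] at hba; rw [if_pos hc2] at hb2a
          have e1 := hlow hc1; have e2 := hlow2 hc2
          apply hadj; omega
        · rw [if_pos hc1] at hba; rw [if_neg hc2] at hb2a
          have e1 := hlow hc1; have e2 := hhigh2 hc2; omega
        · rw [if_neg hc1] at hba; rw [if_pos hc2] at hb2a
          have e1 := hhigh hc1; have e2 := hlow2 hc2; omega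
        · rw [if_neg hc1] at hba; rw [if_neg hc2] at hb2a
          have e1 := hhigh hc1; have e2 := hhigh2 hc2
          apply hadj; omega
    -- cross injectivity
    have hinj2 : Set.InjOn M ((stableSets n k).filter (fun B => x ∈ B ∧ y ∈ B)) := by
      intro B hB B' hB' hMeq
      simp only [Finset.mem_coe] at hB hB'
      obtain ⟨hsub, hcard, hst, hxB, hyB⟩ := hmem B hB
      obtain ⟨hsub', hcard', hst', hxB', hyB'⟩ := hmem B' hB'
      have helper : ∀ b ∈ B \ {x,y}, ∀ b' ∈ B' \ {x,y}, ζ b = ζ b' → b = b' := by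
        intro b hb b' hb' heq
        have hvyB := hvy B hB
        obtain ⟨⟨hbl, hbh⟩, hlow, hhigh⟩ := hBfacts B hB b hb
        obtain ⟨⟨hbl', hbh'⟩, hlow', hhigh'⟩ := hBfacts B' hB' b' hb'
        simp only [Finset.mem_sdiff] at hb hb'
        have hbicc : b ∈ Finset.Icc 1 n := hsub hb.1
        have hbicc' : b' ∈ Finset.Icc 1 n := hsub' hb'.1
        have hxicc : x ∈ Finset.Icc 1 n := hsub hxB
        simp only [Finset.mem_Icc] at hbicc hbicc' hxicc
        simp only [hζ] at heq
        have huu : u b = u b' := by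
          by_cases hc1 : u b < u y <;> by_cases hc2 : u b' < u y
          · rw [if_pos hc1, if_pos hc2] at heq
            have := hlow hc1; have := hlow' hc2; omega
          · rw [if_pos hc1, if_neg hc2] at heq
            have := hlow hc1; have := hhigh' hc2; omega
          · rw [if_neg hc1, if_pos hc2] at heq
            have := hhigh hc1; have := hlow' hc2; omega
          · rw [if_neg hc1, if_neg hc2] at heq
            have e9 := hhigh hc1; have e8 := hhigh' hc2; omega
        exact key0 b b' hbicc.1 hbicc.2 hbicc'.1 hbicc'.2 hxicc.1 hxicc.2 huu
      have hdiffeq : B \ {x,y} = B' \ {x,y} := by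
        apply Finset.Subset.antisymm
        · intro b hb
          have : ζ b ∈ M B' := by rw [← hMeq, hM]; exact Finset.mem_image_of_mem ζ hb
          simp only [hM, Finset.mem_image] at this
          obtain ⟨b', hb', heq⟩ := this
          rwa [helper b hb b' hb' heq.symm]
        · intro b' hb'
          have : ζ b' ∈ M B := by rw [hMeq, hM]; exact Finset.mem_image_of_mem ζ hb'
          simp only [hM, Finset.mem_image] at this
          obtain ⟨b, hb, heq⟩ := this
          rw [← helper b hb b' hb' heq]
          exact hb
      ext a
      by_cases hax : a = x
      · subst hax; simp [hxB, hxB']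
      by_cases hay : a = y
      · subst hay; simp [hyB, hyB']
      constructor
      · intro ha
        have : a ∈ B \ {x,y} := by
          simp only [Finset.mem_sdiff, Finset.mem_insert, Finset.mem_singleton]
          exact ⟨ha, by tauto⟩
        rw [hdiffeq] at this
        simp only [Finset.mem_sdiff] at this
        exact this.1
      · intro ha
        have : a ∈ B' \ {x,y} := by
          simp only [Finset.mem_sdiff, Finset.mem_insert, Finset.mem_singleton]
          exact ⟨ha, by tauto⟩
        rw [← hdiffeq] at this
        simp only [Finset.mem_sdiff] at this
        exact this.1
    calc ((stableSets n k).filter (fun B => x ∈ B ∧ y ∈ B)).card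
        ≤ 𝒩.card := Finset.card_le_card_of_injOn M hmaps hinj2
      _ ≤ (n - k - 2).choose (k - 2) := hcard𝒩


theorem stmt_7 (n k : ℕ) (hk : 2 ≤ k) (hn : 2 * k ≤ n) (F : Finset (Finset ℕ))
    (hF : F ⊆ stableSets n k)
    (hsize : (k ^ 2 * Nat.choose (n - k - 2) (k - 2) : ℝ) ≤ (F.card : ℝ))
    (γ : ℝ) (hγ0 : 0 < γ) (hγ1 : γ ≤ 1)
    (hpop : ∀ j ∈ Finset.Icc 1 n, ((F.filter (fun A => j ∈ A)).card : ℝ) ≤ γ * F.card) :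
    (1 / 4) * ((1 - γ) * F.card - k ^ 2 * Nat.choose (n - k - 2) (k - 2))
        * ((F.card : ℝ) - k ^ 2 * Nat.choose (n - k - 2) (k - 2))
      ≤ (((F.powersetCard 2).filter
            (fun e => ∀ A ∈ e, ∀ B ∈ e, A ≠ B → Disjoint A B)).card : ℝ) := by
  set C2 : ℕ := (n - k - 2).choose (k - 2) with hC2
  set t : ℕ := k * k * C2 with ht
  -- basic facts about members of F
  have hmemF : ∀ A ∈ F, A ⊆ Finset.Icc 1 n ∧ A.card = k ∧ Stable n A := by
    intro A hA
    have := hF hA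
    simp only [stableSets, Finset.mem_filter, Finset.mem_powersetCard] at this
    exact ⟨this.1.1, this.1.2, this.2⟩
  have hne : ∀ A ∈ F, A.Nonempty := by
    intro A hA
    have := (hmemF A hA).2.1
    apply Finset.card_pos.1
    omega
  have hnotdisj : ∀ A ∈ F, ¬ Disjoint A A := by
    intro A hA hcon
    obtain ⟨a, ha⟩ := hne A hA
    exact Finset.disjoint_left.1 hcon ha ha
  -- pair sets are small
  have hpair : ∀ x y : ℕ, x ≠ y →
      (F.filter (fun B => x ∈ B ∧ y ∈ B)).card ≤ C2 := by
    intro x y hxy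
    have hsub : F.filter (fun B => x ∈ B ∧ y ∈ B)
        ⊆ (stableSets n k).filter (fun B => x ∈ B ∧ y ∈ B) := by
      intro B hB
      simp only [Finset.mem_filter] at hB ⊢
      exact ⟨hF hB.1, hB.2⟩
    exact le_trans (Finset.card_le_card hsub) (pair_count n k hk hn x y hxy)
  -- bound for families of pairs
  have hbiUnion : ∀ S : Finset (ℕ × ℕ), (∀ p ∈ S, p.1 ≠ p.2) →
      ((S.biUnion (fun p => F.filter (fun B => p.1 ∈ B ∧ p.2 ∈ B))).card ≤ S.card * C2) := by
    intro S hS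
    calc (S.biUnion (fun p => F.filter (fun B => p.1 ∈ B ∧ p.2 ∈ B))).card
        ≤ ∑ p ∈ S, (F.filter (fun B => p.1 ∈ B ∧ p.2 ∈ B)).card := Finset.card_biUnion_le
      _ ≤ S.card * C2 := by
          rw [← smul_eq_mul]
          apply Finset.sum_le_card_nsmul
          intro p hp
          exact hpair p.1 p.2 (hS p hp)
  -- the degree of a vertex
  set deg : Finset (Finset ℕ) → Finset ℕ → ℕ :=
    fun G A => (G.filter (fun B => Disjoint A B)).card with hdeg
  set EE : Finset (Finset ℕ) → ℕ :=
    fun G => ((G.powersetCard 2).filter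
      (fun e => ∀ A ∈ e, ∀ B ∈ e, A ≠ B → Disjoint A B)).card with hEE
  -- edge decomposition upon removing a vertex
  have hsplitE : ∀ G : Finset (Finset ℕ), G ⊆ F → ∀ A ∈ G,
      EE G = EE (G.erase A) + deg (G.erase A) A := by
    intro G hGF A hA
    set Pp : Finset (Finset ℕ) → Prop :=
      fun e => ∀ X ∈ e, ∀ Y ∈ e, X ≠ Y → Disjoint X Y with hPp
    have h0 : (((G.powersetCard 2).filter Pp).filter (fun e => A ∈ e)).card
        + (((G.powersetCard 2).filter Pp).filter (fun e => ¬ A ∈ e)).card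
        = ((G.powersetCard 2).filter Pp).card :=
      Finset.card_filter_add_card_filter_not _
    have h1 : ((G.powersetCard 2).filter Pp).filter (fun e => ¬ A ∈ e)
        = ((G.erase A).powersetCard 2).filter Pp := by
      ext e
      simp only [Finset.mem_filter, Finset.mem_powersetCard]
      constructor
      · rintro ⟨⟨⟨hsub, hcard⟩, hp⟩, hnot⟩
        exact ⟨⟨Finset.subset_erase.2 ⟨hsub, hnot⟩, hcard⟩, hp⟩
      · rintro ⟨⟨hsub, hcard⟩, hp⟩
        have := Finset.subset_erase.1 hsub
        exact ⟨⟨⟨this.1, hcard⟩, hp⟩, this.2⟩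
    have h2 : ((G.powersetCard 2).filter Pp).filter (fun e => A ∈ e)
        = ((G.erase A).filter (fun B => Disjoint A B)).image (fun B => {A, B}) := by
      ext e
      simp only [Finset.mem_filter, Finset.mem_powersetCard, Finset.mem_image]
      constructor
      · rintro ⟨⟨⟨hsub, hcard⟩, hp⟩, hmm⟩
        obtain ⟨c, d, hcd, rfl⟩ := Finset.card_eq_two.1 hcard
        simp only [Finset.mem_insert, Finset.mem_singleton] at hmm
        rcases hmm with rfl | rfl
        · refine ⟨d, ?_, rfl⟩
          simp only [Finset.mem_filter, Finset.mem_erase]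
          refine ⟨⟨hcd.symm, hsub (Finset.mem_insert_of_mem (Finset.mem_singleton_self d))⟩, ?_⟩
          exact hp _ (Finset.mem_insert_self _ _) d
            (Finset.mem_insert_of_mem (Finset.mem_singleton_self d)) hcd
        · refine ⟨c, ?_, ?_⟩
          · simp only [Finset.mem_filter, Finset.mem_erase]
            refine ⟨⟨hcd, hsub (Finset.mem_insert_self _ _)⟩, ?_⟩
            exact hp _ (Finset.mem_insert_of_mem (Finset.mem_singleton_self _)) c
              (Finset.mem_insert_self _ _) hcd.symm
          · exact (Finset.pair_comm _ c)
      · rintro ⟨B, hBmem, rfl⟩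
        simp only [Finset.mem_filter, Finset.mem_erase] at hBmem
        obtain ⟨⟨hBA, hBG⟩, hdisj⟩ := hBmem
        refine ⟨⟨⟨?_, ?_⟩, ?_⟩, by simp⟩
        · intro z hz
          simp only [Finset.mem_insert, Finset.mem_singleton] at hz
          rcases hz with rfl | rfl
          · exact hA
          · exact hBG
        · rw [Finset.card_insert_of_notMem (by simpa using (Ne.symm hBA)),
            Finset.card_singleton]
        · intro X hX Y hY hXY
          simp only [Finset.mem_insert, Finset.mem_singleton] at hX hY
          rcases hX with rfl | rfl <;> rcases hY with rfl | rfl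
          · exact absurd rfl hXY
          · exact hdisj
          · exact hdisj.symm
          · exact absurd rfl hXY
    have h3 : (((G.erase A).filter (fun B => Disjoint A B)).image
        (fun B => ({A, B} : Finset (Finset ℕ)))).card
        = deg (G.erase A) A := by
      rw [hdeg]
      apply Finset.card_image_of_injOn
      intro B hB B' hB' hee
      simp only [Finset.mem_coe, Finset.mem_filter, Finset.mem_erase] at hB hB'
      have hee' : ({A, B} : Finset (Finset ℕ)) = ({A, B'} : Finset (Finset ℕ)) := hee
      have hBin : B ∈ ({A, B'} : Finset (Finset ℕ)) := by
        rw [← hee']; simp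
      simp only [Finset.mem_insert, Finset.mem_singleton] at hBin
      rcases hBin with rfl | h
      · exact absurd rfl hB.1.1
      · exact h
    rw [hEE]
    simp only
    rw [← h0, h1, h2, h3]
    ring
  -- degree unchanged after erasing the vertex itself
  have hdegerase : ∀ G : Finset (Finset ℕ), G ⊆ F → ∀ A ∈ G,
      deg (G.erase A) A = deg G A := by
    intro G hGF A hA
    rw [hdeg]
    simp only
    congr 1
    ext B
    simp only [Finset.mem_filter, Finset.mem_erase]
    constructor
    · rintro ⟨⟨_, hBG⟩, hd⟩
      exact ⟨hBG, hd⟩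
    · rintro ⟨hBG, hd⟩
      refine ⟨⟨?_, hBG⟩, hd⟩
      rintro rfl
      exact hnotdisj _ (hGF hA) hd
  -- degree sum along an edge
  have hdegsum : ∀ G : Finset (Finset ℕ), G ⊆ F → ∀ A ∈ G, ∀ A' ∈ G, Disjoint A A' →
      G.card ≤ deg G A + deg G A' + t := by
    intro G hGF A hA A' hA' hdisj
    obtain ⟨hAsub, hAcard, _⟩ := hmemF A (hGF hA)
    obtain ⟨hA'sub, hA'card, _⟩ := hmemF A' (hGF hA')
    have h0 : (G.filter (fun B => Disjoint A B)).card
        + (G.filter (fun B => ¬ Disjoint A B)).card = G.card :=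
      Finset.card_filter_add_card_filter_not _
    have h1 : ((G.filter (fun B => ¬ Disjoint A B)).filter (fun B => Disjoint A' B)).card
        + ((G.filter (fun B => ¬ Disjoint A B)).filter (fun B => ¬ Disjoint A' B)).card
        = (G.filter (fun B => ¬ Disjoint A B)).card :=
      Finset.card_filter_add_card_filter_not _
    have h2 : ((G.filter (fun B => ¬ Disjoint A B)).filter (fun B => Disjoint A' B)).card
        ≤ deg G A' := by
      rw [hdeg]
      apply Finset.card_le_card
      intro B hB
      simp only [Finset.mem_filter] at hB ⊢
      exact ⟨hB.1.1, hB.2⟩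
    have h3 : ((G.filter (fun B => ¬ Disjoint A B)).filter (fun B => ¬ Disjoint A' B)).card
        ≤ t := by
      have hsub2 : (G.filter (fun B => ¬ Disjoint A B)).filter (fun B => ¬ Disjoint A' B)
          ⊆ (A ×ˢ A').biUnion (fun p => F.filter (fun B => p.1 ∈ B ∧ p.2 ∈ B)) := by
        intro B hB
        simp only [Finset.mem_filter] at hB
        obtain ⟨⟨hBG, hnd⟩, hnd'⟩ := hB
        obtain ⟨a, haA, haB⟩ := Finset.not_disjoint_iff.1 hnd
        obtain ⟨a', ha'A, ha'B⟩ := Finset.not_disjoint_iff.1 hnd'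
        apply Finset.mem_biUnion.2
        refine ⟨(a, a'), Finset.mem_product.2 ⟨haA, ha'A⟩, ?_⟩
        simp only [Finset.mem_filter]
        exact ⟨hGF hBG, haB, ha'B⟩
      calc ((G.filter (fun B => ¬ Disjoint A B)).filter (fun B => ¬ Disjoint A' B)).card
          ≤ ((A ×ˢ A').biUnion (fun p => F.filter (fun B => p.1 ∈ B ∧ p.2 ∈ B))).card :=
            Finset.card_le_card hsub2
        _ ≤ (A ×ˢ A').card * C2 := by
            apply hbiUnion
            intro p hp
            obtain ⟨hp1, hp2⟩ := Finset.mem_product.1 hp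
            intro hcon
            exact Finset.disjoint_left.1 hdisj hp1 (hcon ▸ hp2)
        _ ≤ t := by
            rw [Finset.card_product, hAcard, hA'card, ht]
    have hdA : deg G A = (G.filter (fun B => Disjoint A B)).card := by rw [hdeg]
    omega
  -- Hilton--Milner style bound : a large family contains two disjoint sets
  have hHM : ∀ G : Finset (Finset ℕ), G ⊆ F →
      (γ * F.card + t < (G.card : ℝ)) →
      ∃ A ∈ G, ∃ A' ∈ G, A ≠ A' ∧ Disjoint A A' := by
    intro G hGF hbig
    by_contra hcon
    push_neg at hcon
    have hint : ∀ A ∈ G, ∀ B ∈ G, ¬ Disjoint A B := by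
      intro A hA B hB
      by_cases hAB : A = B
      · subst hAB; exact hnotdisj A (hGF hA)
      · exact hcon A hA B hB hAB
    have hGne : G.Nonempty := by
      rcases Finset.eq_empty_or_nonempty G with rfl | h
      · simp only [Finset.card_empty, Nat.cast_zero] at hbig
        have ht0 : (0:ℝ) ≤ γ * F.card := by positivity
        have ht1 : (0:ℝ) ≤ (t:ℝ) := by positivity
        linarith
      · exact h
    obtain ⟨A₀, hA₀⟩ := hGne
    obtain ⟨hA₀sub, hA₀card, _⟩ := hmemF A₀ (hGF hA₀)
    by_cases hstar : ∃ Bs ∈ G, (Bs ∩ A₀).card ≤ 1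
    · -- there is a set meeting A₀ in exactly one element
      obtain ⟨Bs, hBsG, hBsc⟩ := hstar
      obtain ⟨hBssub, hBscard, _⟩ := hmemF Bs (hGF hBsG)
      have hBsne : (Bs ∩ A₀).Nonempty := by
        rcases Finset.not_disjoint_iff.1 (hint Bs hBsG A₀ hA₀) with ⟨a, ha1, ha2⟩
        exact ⟨a, Finset.mem_inter.2 ⟨ha1, ha2⟩⟩
      have hBsc1 : (Bs ∩ A₀).card = 1 := by
        have := Finset.card_pos.2 hBsne
        omega
      obtain ⟨js, hjs⟩ := Finset.card_eq_one.1 hBsc1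
      have hjsBs : js ∈ Bs := by
        have : js ∈ Bs ∩ A₀ := by rw [hjs]; exact Finset.mem_singleton_self js
        exact (Finset.mem_inter.1 this).1
      have hjsA₀ : js ∈ A₀ := by
        have : js ∈ Bs ∩ A₀ := by rw [hjs]; exact Finset.mem_singleton_self js
        exact (Finset.mem_inter.1 this).2
      -- cover G by the star at js and the pair sets from A₀ × Bs
      have hcover : G ⊆ (F.filter (fun B => js ∈ B))
          ∪ (((A₀ ×ˢ Bs).filter (fun p => p.1 ≠ p.2)).biUnion
              (fun p => F.filter (fun B => p.1 ∈ B ∧ p.2 ∈ B))) := by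
        intro B hBG
        by_cases hjB : js ∈ B
        · apply Finset.mem_union_left
          simp only [Finset.mem_filter]
          exact ⟨hGF hBG, hjB⟩
        · apply Finset.mem_union_right
          obtain ⟨a, haB, haA₀⟩ := Finset.not_disjoint_iff.1 (hint B hBG A₀ hA₀)
          obtain ⟨b, hbB, hbBs⟩ := Finset.not_disjoint_iff.1 (hint B hBG Bs hBsG)
          have hab : a ≠ b := by
            rintro rfl
            have : a ∈ Bs ∩ A₀ := Finset.mem_inter.2 ⟨hbBs, haA₀⟩
            rw [hjs] at this
            rw [Finset.mem_singleton.1 this] at haB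
            exact hjB haB
          apply Finset.mem_biUnion.2
          refine ⟨(a, b), ?_, ?_⟩
          · simp only [Finset.mem_filter, Finset.mem_product]
            exact ⟨⟨haA₀, hbBs⟩, hab⟩
          · simp only [Finset.mem_filter]
            exact ⟨hGF hBG, haB, hbB⟩
      have hcard1 : ((F.filter (fun B => js ∈ B)).card : ℝ) ≤ γ * F.card := by
        apply hpop
        exact hA₀sub hjsA₀
      have hcard2 : (((A₀ ×ˢ Bs).filter (fun p => p.1 ≠ p.2)).biUnion
          (fun p => F.filter (fun B => p.1 ∈ B ∧ p.2 ∈ B))).card ≤ t := by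
        calc (((A₀ ×ˢ Bs).filter (fun p => p.1 ≠ p.2)).biUnion
            (fun p => F.filter (fun B => p.1 ∈ B ∧ p.2 ∈ B))).card
            ≤ ((A₀ ×ˢ Bs).filter (fun p => p.1 ≠ p.2)).card * C2 := by
              apply hbiUnion
              intro p hp
              exact (Finset.mem_filter.1 hp).2
          _ ≤ (A₀ ×ˢ Bs).card * C2 := by
              apply Nat.mul_le_mul_right
              exact Finset.card_le_card (Finset.filter_subset _ _)
          _ ≤ t := by
              rw [Finset.card_product, hA₀card, hBscard, ht]
      have hcard3 : G.card ≤ (F.filter (fun B => js ∈ B)).card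
          + (((A₀ ×ˢ Bs).filter (fun p => p.1 ≠ p.2)).biUnion
              (fun p => F.filter (fun B => p.1 ∈ B ∧ p.2 ∈ B))).card :=
        le_trans (Finset.card_le_card hcover) (Finset.card_union_le _ _)
      have : (G.card : ℝ) ≤ γ * F.card + t := by
        have c3 : (G.card : ℝ) ≤ ((F.filter (fun B => js ∈ B)).card : ℝ)
            + ((((A₀ ×ˢ Bs).filter (fun p => p.1 ≠ p.2)).biUnion
              (fun p => F.filter (fun B => p.1 ∈ B ∧ p.2 ∈ B))).card : ℝ) := by
          exact_mod_cast hcard3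
        have c2 : ((((A₀ ×ˢ Bs).filter (fun p => p.1 ≠ p.2)).biUnion
              (fun p => F.filter (fun B => p.1 ∈ B ∧ p.2 ∈ B))).card : ℝ) ≤ (t:ℝ) := by
          exact_mod_cast hcard2
        linarith
      linarith
    · -- every set meets A₀ in at least two elements
      push_neg at hstar
      have hcover : G ⊆ ((A₀ ×ˢ A₀).filter (fun p => p.1 ≠ p.2)).biUnion
          (fun p => F.filter (fun B => p.1 ∈ B ∧ p.2 ∈ B)) := by
        intro B hBG
        have h2 : 1 < (B ∩ A₀).card := hstar B hBG
        obtain ⟨a, ha, b, hb, hab⟩ := Finset.one_lt_card.1 h2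
        apply Finset.mem_biUnion.2
        refine ⟨(a, b), ?_, ?_⟩
        · simp only [Finset.mem_filter, Finset.mem_product]
          exact ⟨⟨(Finset.mem_inter.1 ha).2, (Finset.mem_inter.1 hb).2⟩, hab⟩
        · simp only [Finset.mem_filter]
          exact ⟨hGF hBG, (Finset.mem_inter.1 ha).1, (Finset.mem_inter.1 hb).1⟩
      have hcard2 : G.card ≤ t := by
        calc G.card ≤ (((A₀ ×ˢ A₀).filter (fun p => p.1 ≠ p.2)).biUnion
            (fun p => F.filter (fun B => p.1 ∈ B ∧ p.2 ∈ B))).card :=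
              Finset.card_le_card hcover
          _ ≤ ((A₀ ×ˢ A₀).filter (fun p => p.1 ≠ p.2)).card * C2 := by
              apply hbiUnion
              intro p hp
              exact (Finset.mem_filter.1 hp).2
          _ ≤ (A₀ ×ˢ A₀).card * C2 := by
              apply Nat.mul_le_mul_right
              exact Finset.card_le_card (Finset.filter_subset _ _)
          _ ≤ t := by
              rw [Finset.card_product, hA₀card, ht]
      have hg0 : (0:ℝ) ≤ γ * F.card := by positivity
      have : (G.card:ℝ) ≤ (t:ℝ) := by exact_mod_cast hcard2
      linarith
  -- one popular element exists, so γ * |F| ≥ 1  (once F is nonempty)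
  have hu1 : ∀ A₀ ∈ F, (1:ℝ) ≤ γ * F.card := by
    intro A₀ hA₀
    obtain ⟨x, hx⟩ := hne A₀ hA₀
    have hxIcc : x ∈ Finset.Icc 1 n := (hmemF A₀ hA₀).1 hx
    have h1 : (1:ℕ) ≤ (F.filter (fun A => x ∈ A)).card := by
      apply Finset.card_pos.2
      exact ⟨A₀, Finset.mem_filter.2 ⟨hA₀, hx⟩⟩
    have h2 := hpop x hxIcc
    have h3 : (1:ℝ) ≤ ((F.filter (fun A => x ∈ A)).card : ℝ) := by exact_mod_cast h1
    linarith
  -- main induction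
  have hmain : ∀ g : ℕ, ∀ G : Finset (Finset ℕ), G ⊆ F → G.card = g → (t:ℝ) ≤ (g:ℝ) →
      (1/4) * ((g:ℝ) - γ * F.card - t) * ((g:ℝ) - t) ≤ (EE G : ℝ) := by
    intro g
    induction g using Nat.strong_induction_on with
    | _ g ih =>
      intro G hGF hGcard hgt
      by_cases hbase : (g:ℝ) ≤ γ * F.card + t
      · have h1 : ((g:ℝ) - γ * F.card - t) ≤ 0 := by linarith
        have h2 : (0:ℝ) ≤ (g:ℝ) - t := by linarith
        have h3 : (0:ℝ) ≤ (EE G : ℝ) := by positivity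
        nlinarith
      · push_neg at hbase
        obtain ⟨A, hA, A', hA', hAA', hdisjAA⟩ := hHM G hGF (by rw [hGcard] at *; exact hbase)
        have hds := hdegsum G hGF A hA A' hA' hdisjAA
        have hstep : ∀ A₀ ∈ G, ((g:ℝ) - t ≤ 2 * (deg G A₀ : ℝ)) →
            (1/4) * ((g:ℝ) - γ * F.card - t) * ((g:ℝ) - t) ≤ (EE G : ℝ) := by
          intro A₀ hA₀ hdegbig
          have hg1 : 1 ≤ g := by
            rw [← hGcard]
            exact Finset.card_pos.2 ⟨A₀, hA₀⟩
          have hu := hu1 A₀ (hGF hA₀)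
          have hE := hsplitE G hGF A₀ hA₀
          have hdeq := hdegerase G hGF A₀ hA₀
          rw [hdeq] at hE
          have hGcard' : (G.erase A₀).card = g - 1 := by
            rw [Finset.card_erase_of_mem hA₀, hGcard]
          have hcast : ((g - 1 : ℕ) : ℝ) = (g:ℝ) - 1 := by
            have : (1:ℕ) ≤ g := hg1
            push_cast [Nat.cast_sub this]
            ring
          have hIH := ih (g-1) (by omega) (G.erase A₀)
            (fun x hx => hGF (Finset.mem_of_mem_erase hx)) hGcard' ?_
          swap
          · rw [hcast]
            linarith
          rw [hcast] at hIH
          have hEcast : (EE G : ℝ) = (EE (G.erase A₀) : ℝ) + (deg G A₀ : ℝ) := by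
            rw [hE]; push_cast; ring
          have hkey : (1/4) * ((g:ℝ) - γ * F.card - t) * ((g:ℝ) - t)
              = (1/4) * (((g:ℝ) - 1) - γ * F.card - t) * (((g:ℝ) - 1) - t)
                + (1/4) * (2*(g:ℝ) - 1 - γ * F.card - 2*t) := by ring
          have htR : (0:ℝ) ≤ (t:ℝ) := by positivity
          rw [hkey, hEcast]
          have hlast : (1/4) * (2*(g:ℝ) - 1 - γ * F.card - 2*t) ≤ (deg G A₀ : ℝ) := by
            linarith
          linarith
        -- pick the endpoint of larger degree
        rcases le_total (deg G A) (deg G A') with hle | hle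
        · apply hstep A' hA'
          have : (G.card:ℝ) ≤ (deg G A : ℝ) + (deg G A' : ℝ) + t := by
            exact_mod_cast hds
          have hc : ((deg G A : ℝ)) ≤ (deg G A' : ℝ) := by exact_mod_cast hle
          rw [hGcard] at this
          linarith
        · apply hstep A hA
          have : (G.card:ℝ) ≤ (deg G A : ℝ) + (deg G A' : ℝ) + t := by
            exact_mod_cast hds
          have hc : ((deg G A' : ℝ)) ≤ (deg G A : ℝ) := by exact_mod_cast hle
          rw [hGcard] at this
          linarith
  -- conclude
  have hfinal := hmain F.card F (le_refl _) rfl ?_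
  swap
  · have : ((t:ℕ):ℝ) = (k:ℝ)^2 * (C2:ℝ) := by rw [ht]; push_cast; ring
    rw [this]
    exact_mod_cast hsize
  have htcast : ((t:ℕ):ℝ) = (k:ℝ)^2 * (C2:ℝ) := by rw [ht]; push_cast; ring
  rw [htcast] at hfinal
  rw [hEE] at hfinal
  simp only at hfinal
  calc (1 / 4) * ((1 - γ) * F.card - k ^ 2 * Nat.choose (n - k - 2) (k - 2))
        * ((F.card : ℝ) - k ^ 2 * Nat.choose (n - k - 2) (k - 2))
      = (1/4) * ((F.card:ℝ) - γ * F.card - (k:ℝ)^2 * (C2:ℝ))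
        * ((F.card : ℝ) - (k:ℝ)^2 * (C2:ℝ)) := by rw [hC2]; ring
    _ ≤ _ := hfinal
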